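/- For every real z > 0, e^{1/z} = 1 + ∫_0^∞ (∑_{j=0}^∞ t^j/(j!(j+1)!)) e^{-zt} dt. -/

import Mathlib

open MeasureTheory Real

theorem exp_inv_integral_repr (z : ℝ) (hz : 0 < z) :
    Real.exp (1 / z)
      = 1 + ∫ t in Set.Ioi (0 : ℝ),
          (∑' j : ℕ, t ^ j / ((Nat.factorial j : ℝ) * (Nat.factorial (j + 1))))
            * Real.exp (-(z * t)) := by
  set F : ℕ → ℝ → ℝ := fun j t =>
    t ^ j / ((Nat.factorial j : ℝ) * (Nat.factorial (j + 1))) * Real.exp (-(z * t)) with hF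
  -- integrability of t^j * exp(-(z*t)) on Ioi 0
  have hIntPow : ∀ j : ℕ, IntegrableOn (fun t : ℝ => t ^ j * Real.exp (-(z * t)))
      (Set.Ioi 0) := by
    intro j
    have h0 : (0:ℝ) < (j : ℝ) + 1 := by positivity
    have h := Real.GammaIntegral_convergent h0
    have h2 : IntegrableOn (fun t : ℝ => Real.exp (-(z * t)) * (z * t) ^ ((j:ℝ) + 1 - 1))
        (Set.Ioi 0) := by
      have := (integrableOn_Ioi_comp_mul_left_iff
        (fun x : ℝ => Real.exp (-x) * x ^ ((j:ℝ) + 1 - 1)) 0 hz).mpr (by simpa using h)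
      simpa using this
    have h3 : IntegrableOn (fun t : ℝ => Real.exp (-(z * t)) * (z * t) ^ j)
        (Set.Ioi 0) := by
      refine h2.congr_fun (fun t ht => ?_) measurableSet_Ioi
      rw [add_sub_cancel_right]; simp only [Real.rpow_natCast]
    have h4 := h3.const_mul ((1:ℝ)/z^j)
    refine MeasureTheory.IntegrableOn.congr_fun h4 (fun t ht => ?_) measurableSet_Ioi
    rw [mul_pow]
    field_simp
  have hIntF : ∀ j : ℕ, IntegrableOn (F j) (Set.Ioi 0) := by
    intro j
    have := (hIntPow j).const_mul (1 / ((Nat.factorial j : ℝ) * (Nat.factorial (j + 1))))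
    refine MeasureTheory.IntegrableOn.congr_fun this (fun t ht => ?_) measurableSet_Ioi
    simp [hF]
    ring
  -- value of each integral
  have hVal : ∀ j : ℕ, ∫ t in Set.Ioi (0:ℝ), t ^ j * Real.exp (-(z * t))
      = (1 / z) ^ (j + 1) * (Nat.factorial j : ℝ) := by
    intro j
    have h0 : (0:ℝ) < (j : ℝ) + 1 := by positivity
    have h := Real.integral_rpow_mul_exp_neg_mul_Ioi h0 hz
    rw [show ((j:ℝ) + 1 - 1) = (j:ℝ) by ring] at h
    have heq : ∫ t in Set.Ioi (0:ℝ), t ^ j * Real.exp (-(z * t))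
        = ∫ t in Set.Ioi (0:ℝ), t ^ ((j:ℝ)) * Real.exp (-(z * t)) := by
      refine setIntegral_congr_fun measurableSet_Ioi (fun t ht => ?_)
      rw [Real.rpow_natCast]
    rw [heq, h, Real.Gamma_nat_eq_factorial]
    rw [show ((j:ℝ) + 1) = ((j + 1 : ℕ) : ℝ) by push_cast; ring, Real.rpow_natCast]
  have hValF : ∀ j : ℕ, ∫ t in Set.Ioi (0:ℝ), F j t
      = (1 / z) ^ (j + 1) / (Nat.factorial (j + 1) : ℝ) := by
    intro j
    have : ∫ t in Set.Ioi (0:ℝ), F j t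
        = (1 / ((Nat.factorial j : ℝ) * (Nat.factorial (j + 1)))) *
          ∫ t in Set.Ioi (0:ℝ), t ^ j * Real.exp (-(z * t)) := by
      rw [← integral_const_mul]
      refine setIntegral_congr_fun measurableSet_Ioi (fun t ht => ?_)
      simp [hF]; ring
    rw [this, hVal j]
    have hj : (Nat.factorial j : ℝ) ≠ 0 := Nat.cast_ne_zero.mpr (Nat.factorial_ne_zero j)
    have hj1 : (Nat.factorial (j + 1) : ℝ) ≠ 0 := Nat.cast_ne_zero.mpr (Nat.factorial_ne_zero _)
    field_simp
  -- summability of the integrals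
  have hsum : Summable (fun j : ℕ => (1 / z) ^ (j + 1) / (Nat.factorial (j + 1) : ℝ)) := by
    have := Real.summable_pow_div_factorial (1 / z)
    exact (summable_nat_add_iff 1).mpr this
  -- norm integrals
  have hNorm : ∀ j : ℕ, ∫ t in Set.Ioi (0:ℝ), ‖F j t‖
      = ∫ t in Set.Ioi (0:ℝ), F j t := by
    intro j
    refine setIntegral_congr_fun measurableSet_Ioi (fun t ht => ?_)
    have ht' : (0:ℝ) < t := ht
    rw [Real.norm_eq_abs, abs_of_nonneg]
    simp only [hF]
    positivity
  have hSwap : ∫ t in Set.Ioi (0:ℝ), (∑' j : ℕ, F j t)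
      = ∑' j : ℕ, ∫ t in Set.Ioi (0:ℝ), F j t := by
    refine (MeasureTheory.integral_tsum_of_summable_integral_norm hIntF ?_).symm
    have : (fun j : ℕ => ∫ t in Set.Ioi (0:ℝ), ‖F j t‖)
        = fun j : ℕ => (1 / z) ^ (j + 1) / (Nat.factorial (j + 1) : ℝ) := by
      funext j; rw [hNorm j, hValF j]
    rw [this]
    exact hsum
  -- rewrite integrand
  have hIntegrand : ∀ t : ℝ,
      (∑' j : ℕ, t ^ j / ((Nat.factorial j : ℝ) * (Nat.factorial (j + 1))))
        * Real.exp (-(z * t)) = ∑' j : ℕ, F j t := by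
    intro t
    rw [← tsum_mul_right]
  simp_rw [hIntegrand]
  rw [hSwap]
  have : (fun j : ℕ => ∫ t in Set.Ioi (0:ℝ), F j t)
      = fun j : ℕ => (1 / z) ^ (j + 1) / (Nat.factorial (j + 1) : ℝ) := by
    funext j; exact hValF j
  rw [this]
  -- now exp (1/z) = 1 + ∑' j, (1/z)^(j+1)/(j+1)!
  have hexp : Real.exp (1 / z) = ∑' j : ℕ, (1 / z) ^ j / (Nat.factorial j : ℝ) := by
    rw [Real.exp_eq_exp_ℝ, NormedSpace.exp_eq_tsum_div]
  have hsummable : Summable (fun j : ℕ => (1 / z) ^ j / (Nat.factorial j : ℝ)) :=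
    Real.summable_pow_div_factorial (1 / z)
  rw [hexp, Summable.tsum_eq_zero_add hsummable]
  simp
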